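/- If x and y are both allocations in the core of a Shapley-Scarf market with preferences drawn from an objective indifferences domain, then x_i I_i y_i for every agent i (the core is essentially single-valued). -/

import Mathlib

open scoped Classical

namespace ShapleyScarf

/-- A weak preference relation: complete (total) and transitive, hence reflexive. -/
structure WeakOrder (H : Type*) where
  rel : H → H → Prop
  total : ∀ a b, rel a b ∨ rel b a
  trans : ∀ a b c, rel a b → rel b c → rel a c

namespace WeakOrder
variable {H : Type*}
/-- Strict part `P` of a weak preference. -/
def P (R : WeakOrder H) (a b : H) : Prop := R.rel a b ∧ ¬ R.rel b a
/-- Indifference part `I` of a weak preference. -/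
def I (R : WeakOrder H) (a b : H) : Prop := R.rel a b ∧ R.rel b a
end WeakOrder

/-- `lt` is a strict linear order on agents (a tie-breaking order). -/
def IsTieBreak {n : ℕ} (lt : Fin n → Fin n → Prop) : Prop :=
  (∀ a b, a ≠ b → lt a b ∨ lt b a) ∧ Transitive lt ∧ ∀ a, ¬ lt a a

section Defs
variable {n : ℕ} {H : Type*} {B : Type*}

/-- Strict part of the tie-broken preference `P_{i,≻}`: `a` above `b` iff
`a P b`, or `a I b` and the owner of `a` comes before the owner of `b` in `≻_i`. -/
def tieBroken (w : Fin n ≃ H) (R : WeakOrder H) (lt : Fin n → Fin n → Prop) (a b : H) : Prop :=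
  R.P a b ∨ (R.I a b ∧ lt (w.symm a) (w.symm b))

/-- The weak tie-broken relation `R_{i,≻}` (reflexive closure of the strict part). -/
def tieBrokenWeak (w : Fin n ≃ H) (R : WeakOrder H) (lt : Fin n → Fin n → Prop)
    (a b : H) : Prop :=
  a = b ∨ tieBroken w R lt a b

/-- The owner (in `S`) of the `pref`-best house among the endowments of the
remaining agents `S`; the agent with this endowment is whom `i` points at. -/
noncomputable def point (w : Fin n ≃ H) (pref : H → H → Prop) (S : Finset (Fin n))
    (i : Fin n) : Fin n :=
  if h : (S.filter fun m => ∀ j ∈ S, j = m ∨ pref (w m) (w j)).Nonempty then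
    (S.filter fun m => ∀ j ∈ S, j = m ∨ pref (w m) (w j)).min' h
  else i

/-- The agents of `S` lying on some trading cycle of the pointing map. -/
noncomputable def cycleAgents (w : Fin n ≃ H) (pref : Fin n → H → H → Prop)
    (S : Finset (Fin n)) : Finset (Fin n) :=
  S.filter fun i => ∃ k, 0 < k ∧ (fun j => point w (pref j) S j)^[k] i = i

/-- Top trading cycles on strict preferences, fuel-based recursion: in each round all
current trading cycles are executed and their agents removed. -/
noncomputable def TTCaux (w : Fin n ≃ H) (pref : Fin n → H → H → Prop) :
    ℕ → Finset (Fin n) → Fin n → H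
  | 0, _, i => w i
  | fuel + 1, S, i =>
      if i ∈ cycleAgents w pref S then w (point w (pref i) S i)
      else TTCaux w pref fuel (S \ cycleAgents w pref S) i

/-- Gale's top trading cycles algorithm for a strict preference profile. -/
noncomputable def TTCstrict (w : Fin n ≃ H) (pref : Fin n → H → H → Prop) : Fin n → H :=
  TTCaux w pref n Finset.univ

/-- Round (executed-cycle index, starting from 1) at which an agent is assigned. -/
noncomputable def TTCroundAux (w : Fin n ≃ H) (pref : Fin n → H → H → Prop) :
    ℕ → Finset (Fin n) → Fin n → ℕ
  | 0, _, _ => 1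
  | fuel + 1, S, i =>
      if i ∈ cycleAgents w pref S then 1
      else TTCroundAux w pref fuel (S \ cycleAgents w pref S) i + 1

/-- TTC with fixed tie-breaking: `TTC_≻(R) = TTC(R_≻)`. -/
noncomputable def TTCtb (w : Fin n ≃ H) (R : Fin n → WeakOrder H)
    (tb : Fin n → Fin n → Fin n → Prop) : Fin n → H :=
  TTCstrict w fun i => tieBroken w (R i) (tb i)

/-- The round in which agent `i` is assigned under `TTC_≻(R)`. -/
noncomputable def TTCtbRound (w : Fin n ≃ H) (R : Fin n → WeakOrder H)
    (tb : Fin n → Fin n → Fin n → Prop) (i : Fin n) : ℕ :=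
  TTCroundAux w (fun a => tieBroken w (R a) (tb a)) n Finset.univ i

/-- Objective indifferences w.r.t. the partition of `H` into the fibers of `blk`:
indifference holds exactly between houses in the same block. -/
def ObjInd (blk : H → B) (R : WeakOrder H) : Prop :=
  ∀ a b, R.I a b ↔ blk a = blk b

/-- `x` is blocked: some coalition `Q` can reallocate its own endowments making
all its members weakly better off and one strictly better off. -/
def Blocks (w : Fin n ≃ H) (R : Fin n → WeakOrder H) (x : Fin n → H) : Prop :=
  ∃ (Q : Finset (Fin n)) (y : Fin n ≃ H),
    Q.image (⇑y) = Q.image (⇑w) ∧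
    (∀ i ∈ Q, (R i).rel (y i) (x i)) ∧
    ∃ i ∈ Q, (R i).P (y i) (x i)

/-- `x` is weakly blocked: some nonempty coalition can reallocate its own
endowments making all of its members strictly better off. -/
def WeaklyBlocks (w : Fin n ≃ H) (R : Fin n → WeakOrder H) (x : Fin n → H) : Prop :=
  ∃ Q : Finset (Fin n), Q.Nonempty ∧ ∃ y : Fin n ≃ H,
    Q.image (⇑y) = Q.image (⇑w) ∧ ∀ i ∈ Q, (R i).P (y i) (x i)

/-- `y` Pareto dominates `x`. -/
def ParetoDom (R : Fin n → WeakOrder H) (y x : Fin n → H) : Prop :=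
  (∀ i, (R i).rel (y i) (x i)) ∧ ∃ i, (R i).P (y i) (x i)

end Defs

section Aux

private lemma exists_best {α : Type*} (r : α → α → Prop)
    (htot : ∀ a b, r a b ∨ r b a) (htr : ∀ a b c, r a b → r b c → r a c)
    (S : Finset α) : S.Nonempty → ∃ m ∈ S, ∀ j ∈ S, r m j := by
  classical
  induction S using Finset.induction_on with
  | empty => intro h; exact absurd h (by simp)
  | @insert a s ha ih =>
    intro _
    rcases s.eq_empty_or_nonempty with rfl | hs
    · refine ⟨a, Finset.mem_insert_self _ _, ?_⟩
      intro j hj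
      rcases Finset.mem_insert.1 hj with rfl | hj
      · rcases htot j j with h | h <;> exact h
      · exact absurd hj (Finset.notMem_empty _)
    · obtain ⟨mm, hmm, hbest⟩ := ih hs
      rcases htot a mm with h | h
      · refine ⟨a, Finset.mem_insert_self _ _, ?_⟩
        intro j hj
        rcases Finset.mem_insert.1 hj with rfl | hj
        · rcases htot j j with h' | h' <;> exact h'
        · exact htr _ _ _ h (hbest j hj)
      · refine ⟨mm, Finset.mem_insert_of_mem hmm, ?_⟩
        intro j hj
        rcases Finset.mem_insert.1 hj with rfl | hj
        · exact h
        · exact hbest j hj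

private lemma exists_inj_bk {α β : Type*} [DecidableEq α] (bk : α → β) :
    ∀ (m : ℕ) (s t : Finset α), s.card = m → s.val.map bk = t.val.map bk →
    ∃ φ : α → α, (∀ a ∈ s, φ a ∈ t) ∧ Set.InjOn φ ↑s ∧ ∀ a ∈ s, bk (φ a) = bk a := by
  intro m
  induction m with
  | zero =>
    intro s t hs _
    have hs' : s = ∅ := Finset.card_eq_zero.1 hs
    subst hs'
    exact ⟨id, fun a ha => absurd ha (Finset.notMem_empty a), by simp,
      fun a ha => absurd ha (Finset.notMem_empty a)⟩
  | succ m ih =>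
    intro s t hs hmap
    obtain ⟨a, ha⟩ := Finset.card_pos.1 (by rw [hs]; exact m.succ_pos)
    have hba : bk a ∈ t.val.map bk := by
      rw [← hmap]; exact Multiset.mem_map_of_mem _ ha
    obtain ⟨b, hb, hbk⟩ := Multiset.mem_map.1 hba
    have hb' : b ∈ t := hb
    have hs' : (s.erase a).card = m := by
      rw [Finset.card_erase_of_mem ha, hs]; rfl
    have hmap' : (s.erase a).val.map bk = (t.erase b).val.map bk := by
      have h1 : s.val = a ::ₘ (s.erase a).val := by
        rw [Finset.erase_val]
        exact (Multiset.cons_erase (show a ∈ s.val from ha)).symm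
      have h2 : t.val = b ::ₘ (t.erase b).val := by
        rw [Finset.erase_val]
        exact (Multiset.cons_erase (show b ∈ t.val from hb')).symm
      have hthis := hmap
      rw [h1, h2, Multiset.map_cons, Multiset.map_cons, hbk] at hthis
      exact (Multiset.cons_inj_right _).1 hthis
    obtain ⟨φ', hmt, hinj, hbkp⟩ := ih (s.erase a) (t.erase b) hs' hmap'
    refine ⟨Function.update φ' a b, ?_, ?_, ?_⟩
    · intro a' ha'
      by_cases h : a' = a
      · subst h; rw [Function.update_self]; exact hb'
      · rw [Function.update_of_ne h]
        exact Finset.mem_of_mem_erase (hmt a' (Finset.mem_erase.2 ⟨h, ha'⟩))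
    · intro u hu v hv huv
      have hu' : u ∈ s := hu
      have hv' : v ∈ s := hv
      by_cases hu1 : u = a <;> by_cases hv1 : v = a
      · rw [hu1, hv1]
      · exfalso
        rw [hu1, Function.update_self, Function.update_of_ne hv1] at huv
        have hmem := hmt v (Finset.mem_erase.2 ⟨hv1, hv'⟩)
        rw [← huv] at hmem
        exact (Finset.mem_erase.1 hmem).1 rfl
      · exfalso
        rw [hv1, Function.update_self, Function.update_of_ne hu1] at huv
        have hmem := hmt u (Finset.mem_erase.2 ⟨hu1, hu'⟩)
        rw [huv] at hmem
        exact (Finset.mem_erase.1 hmem).1 rfl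
      · rw [Function.update_of_ne hu1, Function.update_of_ne hv1] at huv
        exact hinj (Finset.mem_coe.2 (Finset.mem_erase.2 ⟨hu1, hu'⟩))
          (Finset.mem_coe.2 (Finset.mem_erase.2 ⟨hv1, hv'⟩)) huv
    · intro a' ha'
      by_cases h : a' = a
      · subst h; rw [Function.update_self]; exact hbk
      · rw [Function.update_of_ne h]
        exact hbkp a' (Finset.mem_erase.2 ⟨h, ha'⟩)

private lemma blocks_of_indiff {n : ℕ} {H : Type*} (w : Fin n ≃ H) (R : Fin n → WeakOrder H)
    (x x' : Fin n → H) (h : ∀ j, (R j).I (x' j) (x j)) :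
    Blocks w R x' → Blocks w R x := by
  rintro ⟨Q, z, himg, hweak, i, hi, hP⟩
  refine ⟨Q, z, himg, ?_, i, hi, ?_⟩
  · intro j hj
    exact (R j).trans _ _ _ (hweak j hj) (h j).1
  · exact ⟨(R i).trans _ _ _ hP.1 (h i).1,
      fun hc => hP.2 ((R i).trans _ _ _ (h i).1 hc)⟩

private lemma cycle_best {n : ℕ} {H : Type*} (w : Fin n ≃ H) (R : Fin n → WeakOrder H)
    (S C : Finset (Fin n)) (hCS : C ⊆ S)
    (f : Fin n → Fin n) (hfb : ∀ i, ∀ k ∈ S, (R i).rel (w (f i)) (w k))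
    (z : Fin n ≃ H) (hz : ∀ j ∈ C, z j = w (f j)) (himg : C.image ⇑z = C.image ⇑w)
    (ξ : Fin n → Fin n) (hξS : ∀ i ∈ S, ξ i ∈ S)
    (hnb : ¬ Blocks w R (fun i => w (ξ i))) :
    ∀ j ∈ C, ∀ k ∈ S, (R j).rel (w (ξ j)) (w k) := by
  by_contra hcon
  push_neg at hcon
  obtain ⟨j0, hj0, k0, hk0, hnrel⟩ := hcon
  apply hnb
  refine ⟨C, z, himg, ?_, j0, hj0, ?_⟩
  · intro j hj
    show (R j).rel (z j) (w (ξ j))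
    rw [hz j hj]
    exact hfb j (ξ j) (hξS j (hCS hj))
  · show (R j0).P (z j0) (w (ξ j0))
    rw [hz j0 hj0]
    refine ⟨hfb j0 (ξ j0) (hξS j0 (hCS hj0)), ?_⟩
    intro hrel
    exact hnrel ((R j0).trans _ _ _ hrel (hfb j0 k0 hk0))

private lemma exists_normalize {n : ℕ} {H B : Type*} (w : Fin n ≃ H) (blk : H → B)
    (S C : Finset (Fin n)) (hCS : C ⊆ S)
    (f : Fin n → Fin n) (hfC : ∀ j ∈ C, f j ∈ C) (hfCinj : Set.InjOn f ↑C)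
    (ξ : Fin n → Fin n) (hξinj : Set.InjOn ξ ↑S) (hξS : ∀ i ∈ S, ξ i ∈ S)
    (hbkξ : ∀ j ∈ C, blk (w (ξ j)) = blk (w (f j))) :
    ∃ ξ' : Fin n → Fin n, (∀ j ∈ S \ C, ξ' j ∈ S \ C) ∧ Set.InjOn ξ' ↑(S \ C) ∧
      ∀ j, blk (w (ξ' j)) = blk (w (ξ j)) := by
  classical
  have hCf : C.image f = C := by
    apply Finset.eq_of_subset_of_card_le
    · intro v hv
      obtain ⟨u, hu, rfl⟩ := Finset.mem_image.1 hv
      exact hfC u hu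
    · exact le_of_eq (Finset.card_image_of_injOn hfCinj).symm
  have hξSS : S.image ξ = S := by
    apply Finset.eq_of_subset_of_card_le
    · intro v hv
      obtain ⟨u, hu, rfl⟩ := Finset.mem_image.1 hv
      exact hξS u hu
    · exact le_of_eq (Finset.card_image_of_injOn hξinj).symm
  have hdisj1 : Disjoint (C.image ξ) ((S \ C).image ξ) := by
    rw [Finset.disjoint_left]
    intro a ha hb
    obtain ⟨u, hu, rfl⟩ := Finset.mem_image.1 ha
    obtain ⟨v, hv, hveq⟩ := Finset.mem_image.1 hb
    have hvu : v = u := hξinj (Finset.mem_coe.2 (Finset.mem_sdiff.1 hv).1)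
      (Finset.mem_coe.2 (hCS hu)) hveq
    exact (Finset.mem_sdiff.1 hv).2 (by rw [hvu]; exact hu)
  have hunion : C.image ξ ∪ (S \ C).image ξ = S := by
    rw [← Finset.image_union, Finset.union_sdiff_of_subset hCS, hξSS]
  have hval1 : (C.image ξ).val + ((S \ C).image ξ).val = S.val := by
    have h1 : ((C.image ξ).disjUnion ((S \ C).image ξ) hdisj1).val
        = (C.image ξ).val + ((S \ C).image ξ).val := rfl
    rw [Finset.disjUnion_eq_union, hunion] at h1
    exact h1.symm
  have hval2 : C.val + (S \ C).val = S.val := by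
    have h1 : (C.disjUnion (S \ C) Finset.disjoint_sdiff).val = C.val + (S \ C).val := rfl
    rw [Finset.disjUnion_eq_union, Finset.union_sdiff_of_subset hCS] at h1
    exact h1.symm
  have hmapC : (C.image ξ).val.map (fun j => blk (w j)) = C.val.map (fun j => blk (w j)) := by
    rw [Finset.image_val_of_injOn (hξinj.mono (Finset.coe_subset.2 hCS)), Multiset.map_map]
    have h2 : C.val.map ((fun j => blk (w j)) ∘ ξ) = C.val.map ((fun j => blk (w j)) ∘ f) :=
      Multiset.map_congr rfl (fun u hu => hbkξ u hu)
    rw [h2, ← Multiset.map_map, ← Finset.image_val_of_injOn hfCinj, hCf]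
  have hmapT : ((S \ C).image ξ).val.map (fun j => blk (w j))
      = (S \ C).val.map (fun j => blk (w j)) := by
    have e1 : (C.image ξ).val.map (fun j => blk (w j))
        + ((S \ C).image ξ).val.map (fun j => blk (w j))
        = S.val.map (fun j => blk (w j)) := by
      rw [← Multiset.map_add, hval1]
    have e2 : C.val.map (fun j => blk (w j)) + (S \ C).val.map (fun j => blk (w j))
        = S.val.map (fun j => blk (w j)) := by
      rw [← Multiset.map_add, hval2]
    rw [hmapC] at e1
    exact add_left_cancel (e1.trans e2.symm)
  obtain ⟨φ, hφt, hφinj, hφbk⟩ := exists_inj_bk (fun j => blk (w j)) ((S \ C).image ξ).card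
    ((S \ C).image ξ) (S \ C) rfl hmapT
  refine ⟨fun j => if j ∈ S \ C then φ (ξ j) else ξ j, ?_, ?_, ?_⟩
  · intro j hj
    simp only [if_pos hj]
    exact hφt _ (Finset.mem_image_of_mem ξ hj)
  · intro u hu v hv huv
    have hu' : u ∈ S \ C := hu
    have hv' : v ∈ S \ C := hv
    simp only [if_pos hu', if_pos hv'] at huv
    have h1 := hφinj (Finset.mem_coe.2 (Finset.mem_image_of_mem ξ hu'))
      (Finset.mem_coe.2 (Finset.mem_image_of_mem ξ hv')) huv
    exact hξinj (Finset.mem_coe.2 (Finset.mem_sdiff.1 hu').1)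
      (Finset.mem_coe.2 (Finset.mem_sdiff.1 hv').1) h1
  · intro j
    by_cases hj : j ∈ S \ C
    · simp only [if_pos hj]
      exact hφbk _ (Finset.mem_image_of_mem ξ hj)
    · simp only [if_neg hj]

private lemma core_main {n : ℕ} {H B : Type*} (w : Fin n ≃ H) (blk : H → B)
    (R : Fin n → WeakOrder H) (hR : ∀ i, ObjInd blk (R i)) :
    ∀ (m : ℕ) (S : Finset (Fin n)) (ξ η : Fin n → Fin n),
      S.card ≤ m →
      Set.InjOn ξ ↑S → (∀ i ∈ S, ξ i ∈ S) →
      Set.InjOn η ↑S → (∀ i ∈ S, η i ∈ S) →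
      ¬ Blocks w R (fun i => w (ξ i)) → ¬ Blocks w R (fun i => w (η i)) →
      ∀ i ∈ S, (R i).I (w (ξ i)) (w (η i)) := by
  classical
  intro m
  induction m with
  | zero =>
    intro S ξ η hcard _ _ _ _ _ _ i hi
    rw [Nat.le_zero, Finset.card_eq_zero] at hcard
    subst hcard
    exact absurd hi (Finset.notMem_empty i)
  | succ m ih =>
    intro S ξ η hcard hξinj hξS hηinj hηS hξnb hηnb
    rcases S.eq_empty_or_nonempty with rfl | hS
    · intro i hi; exact absurd hi (Finset.notMem_empty i)
    have hbestex : ∀ i : Fin n, ∃ j, j ∈ S ∧ ∀ k ∈ S, (R i).rel (w j) (w k) := by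
      intro i
      obtain ⟨j, hj, hjb⟩ := exists_best (fun a b => (R i).rel (w a) (w b))
        (fun a b => (R i).total _ _) (fun a b c => (R i).trans _ _ _) S hS
      exact ⟨j, hj, hjb⟩
    set f : Fin n → Fin n := fun i => Classical.choose (hbestex i) with hfdef
    have hfS : ∀ i, f i ∈ S := fun i => (Classical.choose_spec (hbestex i)).1
    have hfb : ∀ i, ∀ k ∈ S, (R i).rel (w (f i)) (w k) :=
      fun i => (Classical.choose_spec (hbestex i)).2
    obtain ⟨i0, hi0⟩ := hS
    have hiter0 : ∀ mm : ℕ, f^[mm] i0 ∈ S := by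
      intro mm
      cases mm with
      | zero => simpa using hi0
      | succ k => rw [Function.iterate_succ_apply']; exact hfS _
    have hex : ∃ kk, 0 < kk ∧ ∃ i, i ∈ S ∧ f^[kk] i = i := by
      obtain ⟨a, b, hab, heq⟩ :=
        Finite.exists_ne_map_eq_of_infinite (fun mm : ℕ => f^[mm] i0)
      rcases Nat.lt_or_ge a b with h | h
      · exact ⟨b - a, by omega, f^[a] i0, hiter0 a, by
          rw [← Function.iterate_add_apply, Nat.sub_add_cancel h.le]
          exact heq.symm⟩
      · have h' : b < a := by omega
        exact ⟨a - b, by omega, f^[b] i0, hiter0 b, by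
          rw [← Function.iterate_add_apply, Nat.sub_add_cancel h'.le]
          exact heq⟩
    obtain ⟨kc, hkspec, hminP⟩ : ∃ kc, (0 < kc ∧ ∃ i, i ∈ S ∧ f^[kc] i = i) ∧
        ∀ mm, mm < kc → ¬(0 < mm ∧ ∃ i, i ∈ S ∧ f^[mm] i = i) :=
      ⟨Nat.find hex, Nat.find_spec hex, fun mm h => Nat.find_min hex h⟩
    obtain ⟨hkpos, i, hiS, hik⟩ := hkspec
    have hmin : ∀ mm, 0 < mm → mm < kc → f^[mm] i ≠ i := fun mm h1 h2 h3 =>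
      hminP mm h2 ⟨h1, i, hiS, h3⟩
    have hiterS : ∀ mm : ℕ, f^[mm] i ∈ S := by
      intro mm
      cases mm with
      | zero => simpa using hiS
      | succ k => rw [Function.iterate_succ_apply']; exact hfS _
    set C : Finset (Fin n) := (Finset.range kc).image (fun mm => f^[mm] i) with hCdef
    have hiC : i ∈ C := by
      rw [hCdef]
      exact Finset.mem_image.2 ⟨0, Finset.mem_range.2 hkpos, rfl⟩
    have hCS : C ⊆ S := by
      intro v hv
      rw [hCdef] at hv
      obtain ⟨a, _, rfl⟩ := Finset.mem_image.1 hv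
      exact hiterS a
    have einj : ∀ a, a < kc → ∀ b, b < kc → f^[a] i = f^[b] i → a = b := by
      intro a ha b hb heq2
      by_contra hne
      rcases Nat.lt_or_ge a b with h | h
      · apply hmin ((kc - b) + a) (by omega) (by omega)
        rw [Function.iterate_add_apply, heq2, ← Function.iterate_add_apply,
          Nat.sub_add_cancel hb.le]
        exact hik
      · have h' : b < a := by omega
        apply hmin ((kc - a) + b) (by omega) (by omega)
        rw [Function.iterate_add_apply, ← heq2, ← Function.iterate_add_apply,
          Nat.sub_add_cancel ha.le]
        exact hik
    have key : ∀ a, a < kc → ∀ b, b < kc → f^[a+1] i = f^[b+1] i → a = b := by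
      intro a ha b hb h
      by_cases h1 : a + 1 = kc <;> by_cases h2 : b + 1 = kc
      · omega
      · exfalso
        rw [h1, hik] at h
        exact hmin (b+1) (by omega) (by omega) h.symm
      · exfalso
        rw [h2, hik] at h
        exact hmin (a+1) (by omega) (by omega) h
      · have := einj (a+1) (by omega) (b+1) (by omega) h
        omega
    have hfC : ∀ j ∈ C, f j ∈ C := by
      intro j hj
      rw [hCdef] at hj ⊢
      obtain ⟨a, haR, rfl⟩ := Finset.mem_image.1 hj
      rw [Finset.mem_range] at haR
      rw [← Function.iterate_succ_apply' f a i]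
      by_cases h : a + 1 = kc
      · have hstep : f^[a + 1] i = i := by rw [h]; exact hik
        rw [show a.succ = a + 1 from rfl, hstep]
        exact Finset.mem_image.2 ⟨0, Finset.mem_range.2 hkpos, rfl⟩
      · exact Finset.mem_image.2 ⟨a + 1, Finset.mem_range.2 (by omega), rfl⟩
    have hfCinj : Set.InjOn f ↑C := by
      intro u hu v hv huv
      have hu' : u ∈ C := hu
      have hv' : v ∈ C := hv
      rw [hCdef] at hu' hv'
      obtain ⟨a, haR, rfl⟩ := Finset.mem_image.1 hu'
      obtain ⟨b, hbR, rfl⟩ := Finset.mem_image.1 hv'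
      rw [Finset.mem_range] at haR hbR
      rw [← Function.iterate_succ_apply' f a i, ← Function.iterate_succ_apply' f b i] at huv
      have hab := key a haR b hbR huv
      subst hab
      rfl
    set g : Fin n → Fin n := fun j => if j ∈ C then f j else j with hgdef
    have hgC : ∀ j ∈ C, g j = f j := by
      intro j hj
      simp only [hgdef]
      rw [if_pos hj]
    have hgnC : ∀ j, j ∉ C → g j = j := by
      intro j hj
      simp only [hgdef]
      rw [if_neg hj]
    have hginj : Function.Injective g := by
      intro u v huv
      by_cases hu : u ∈ C <;> by_cases hv : v ∈ C
      · rw [hgC u hu, hgC v hv] at huv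
        exact hfCinj (Finset.mem_coe.2 hu) (Finset.mem_coe.2 hv) huv
      · rw [hgC u hu, hgnC v hv] at huv
        have hvC : v ∈ C := by rw [← huv]; exact hfC u hu
        exact absurd hvC hv
      · rw [hgnC u hu, hgC v hv] at huv
        have huC : u ∈ C := by rw [huv]; exact hfC v hv
        exact absurd huC hu
      · rw [hgnC u hu, hgnC v hv] at huv
        exact huv
    have hgbij : Function.Bijective g := Finite.injective_iff_bijective.1 hginj
    have hCg : C.image g = C := by
      apply Finset.eq_of_subset_of_card_le
      · intro v hv
        obtain ⟨u, hu, rfl⟩ := Finset.mem_image.1 hv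
        rw [hgC u hu]
        exact hfC u hu
      · exact le_of_eq (Finset.card_image_of_injective C hginj).symm
    set z : Fin n ≃ H := (Equiv.ofBijective g hgbij).trans w with hzdef
    have hzapp : ∀ j ∈ C, z j = w (f j) := by
      intro j hj
      rw [hzdef]
      simp only [Equiv.trans_apply, Equiv.ofBijective_apply]
      rw [hgC j hj]
    have himg : C.image ⇑z = C.image ⇑w := by
      have h1 : ⇑z = ⇑w ∘ g := by
        rw [hzdef]; rfl
      rw [h1, ← Finset.image_image, hCg]
    have hbestξ := cycle_best w R S C hCS f hfb z hzapp himg ξ hξS hξnb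
    have hbestη := cycle_best w R S C hCS f hfb z hzapp himg η hηS hηnb
    have hbkξ : ∀ j ∈ C, blk (w (ξ j)) = blk (w (f j)) := fun j hj =>
      (hR j _ _).1 ⟨hbestξ j hj (f j) (hfS j), hfb j (ξ j) (hξS j (hCS hj))⟩
    have hbkη : ∀ j ∈ C, blk (w (η j)) = blk (w (f j)) := fun j hj =>
      (hR j _ _).1 ⟨hbestη j hj (f j) (hfS j), hfb j (η j) (hηS j (hCS hj))⟩
    obtain ⟨ξ', hξ't, hξ'inj, hξ'bk⟩ :=
      exists_normalize w blk S C hCS f hfC hfCinj ξ hξinj hξS hbkξ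
    obtain ⟨η', hη't, hη'inj, hη'bk⟩ :=
      exists_normalize w blk S C hCS f hfC hfCinj η hηinj hηS hbkη
    have hIξ : ∀ j, (R j).I (w (ξ' j)) (w (ξ j)) := fun j => (hR j _ _).2 (hξ'bk j)
    have hIη : ∀ j, (R j).I (w (η' j)) (w (η j)) := fun j => (hR j _ _).2 (hη'bk j)
    have hnbξ' : ¬ Blocks w R (fun i => w (ξ' i)) := fun hB =>
      hξnb (blocks_of_indiff w R (fun i => w (ξ i)) (fun i => w (ξ' i)) hIξ hB)
    have hnbη' : ¬ Blocks w R (fun i => w (η' i)) := fun hB =>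
      hηnb (blocks_of_indiff w R (fun i => w (η i)) (fun i => w (η' i)) hIη hB)
    have hcard' : (S \ C).card ≤ m := by
      have hlt : S \ C ⊂ S := Finset.sdiff_ssubset hCS ⟨i, hiC⟩
      have := Finset.card_lt_card hlt
      omega
    have hrest := ih (S \ C) ξ' η' hcard' hξ'inj hξ't hη'inj hη't hnbξ' hnbη'
    intro j hj
    by_cases hjC : j ∈ C
    · exact ⟨hbestξ j hjC (η j) (hηS j hj), hbestη j hjC (ξ j) (hξS j hj)⟩
    · have h3 := hrest j (Finset.mem_sdiff.2 ⟨hj, hjC⟩)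
      have h1 := hIξ j
      have h2 := hIη j
      exact ⟨(R j).trans _ _ _ ((R j).trans _ _ _ h1.2 h3.1) h2.1,
             (R j).trans _ _ _ ((R j).trans _ _ _ h2.2 h3.2) h1.1⟩

end Aux

/-- under objective indifferences the core is essentially
single-valued: any two core allocations leave every agent indifferent. -/
theorem core_essentially_single_valued_objInd {n : ℕ} {H B : Type*} (w : Fin n ≃ H)
    (blk : H → B) (R : Fin n → WeakOrder H) (hR : ∀ i, ObjInd blk (R i))
    (x y : Fin n ≃ H) (hx : ¬ Blocks w R ⇑x) (hy : ¬ Blocks w R ⇑y) :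
    ∀ i, (R i).I (x i) (y i) := by
  have hxeq : (fun i => w (w.symm (x i))) = ⇑x := funext fun i => w.apply_symm_apply (x i)
  have hyeq : (fun i => w (w.symm (y i))) = ⇑y := funext fun i => w.apply_symm_apply (y i)
  have h := core_main w blk R hR Finset.univ.card Finset.univ
    (fun j => w.symm (x j)) (fun j => w.symm (y j)) le_rfl
    ((w.symm.injective.comp x.injective).injOn)
    (fun i _ => Finset.mem_univ _)
    ((w.symm.injective.comp y.injective).injOn)
    (fun i _ => Finset.mem_univ _)
    (by rw [hxeq]; exact hx) (by rw [hyeq]; exact hy)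
  intro i
  have h2 := h i (Finset.mem_univ i)
  rwa [w.apply_symm_apply, w.apply_symm_apply] at h2

end ShapleyScarf
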